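/- Let A ⊆ ℝ³ be locally finite and a ∈ A. Then for every k ≥ 1, the k-th Dirichlet–Voronoi domain D_k(a;A) = {x ∈ ℝ³ : #{b ∈ A : ‖x−b‖ < ‖x−a‖} ≤ k−1} is a closed and star-convex set with respect to the center a (i.e., for every x ∈ D_k(a;A) and λ ∈ [0,1], the point a + λ(x−a) also lies in D_k(a;A)). -/
import Mathlib


open MeasureTheory Set Metric Pointwise

noncomputable section

/-- 3-dimensional Euclidean space. -/
abbrev E3 := EuclideanSpace ℝ (Fin 3)

/-- The lattice generated by the vectors `b 0, b 1, b 2`. -/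
def lat (b : Fin 3 → E3) : Set E3 := {x | ∃ n : Fin 3 → ℤ, x = ∑ i, (n i : ℝ) • b i}

/-- The unit cell spanned by the vectors `b 0, b 1, b 2`. -/
def cell (b : Fin 3 → E3) : Set E3 :=
  {x | ∃ c : Fin 3 → ℝ, (∀ i, 0 ≤ c i ∧ c i < 1) ∧ x = ∑ i, c i • b i}

/-- The `k`-fold cover: points lying in at least `k` closed balls of radius `t`
centered at points of `A`. -/
def coverGE (A : Set E3) (t : ℝ) (k : ℕ) : Set E3 :=
  {x | ∃ F : Finset E3, F.card = k ∧ ↑F ⊆ A ∧ ∀ a ∈ F, dist x a ≤ t}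

/-- Points lying in exactly `k` closed balls of radius `t` centered at points of `A`. -/
def coverEQ (A : Set E3) (t : ℝ) (k : ℕ) : Set E3 :=
  {x | ∃ F : Finset E3, ↑F = {a ∈ A | dist x a ≤ t} ∧ F.card = k}

/-- The `k`-th Dirichlet–Voronoi domain of `a` in `A` (with `D_0 = ∅`). -/
def DV (A : Set E3) (a : E3) : ℕ → Set E3
  | 0 => ∅
  | (k+1) => {x | ({b ∈ A | dist x b < dist x a}).ncard ≤ k}

/-- The `k`-th Brillouin zone of `a` in `A`. -/
def BZ (A : Set E3) (a : E3) (k : ℕ) : Set E3 := DV A a k \ DV A a (k-1)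

theorem DV_closed_starConvex (A : Set E3)
    (hlf : ∀ K : Set E3, IsCompact K → (A ∩ K).Finite)
    (a : E3) (ha : a ∈ A) (k : ℕ) (hk : 1 ≤ k) :
    IsClosed (DV A a k) ∧
      ∀ x ∈ DV A a k, ∀ l : ℝ, l ∈ Set.Icc (0 : ℝ) 1 →
        a + l • (x - a) ∈ DV A a k := by
  obtain ⟨m, rfl⟩ : ∃ m, k = m + 1 := ⟨k - 1, by omega⟩
  have Sfin : ∀ x : E3, {b ∈ A | dist x b < dist x a}.Finite := by
    intro x
    apply (hlf (Metric.closedBall x (dist x a)) (isCompact_closedBall x _)).subset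
    rintro b ⟨hbA, hb⟩
    exact ⟨hbA, Metric.mem_closedBall.2 (dist_comm b x ▸ hb.le)⟩
  constructor
  · rw [← isOpen_compl_iff, isOpen_iff_forall_mem_open]
    intro x hx
    simp only [DV, mem_compl_iff, mem_setOf_eq, not_le] at hx
    refine ⟨⋂ b ∈ (Sfin x).toFinset, {y | dist y b < dist y a}, ?_, ?_, ?_⟩
    · intro y hy
      simp only [mem_iInter] at hy
      simp only [DV, mem_compl_iff, mem_setOf_eq, not_le]
      have hsub : {b ∈ A | dist x b < dist x a} ⊆ {b ∈ A | dist y b < dist y a} := by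
        rintro b ⟨hbA, hb⟩
        exact ⟨hbA, hy b ((Sfin x).mem_toFinset.2 ⟨hbA, hb⟩)⟩
      exact lt_of_lt_of_le hx (Set.ncard_le_ncard hsub (Sfin y))
    · exact isOpen_biInter_finset fun b _ =>
        isOpen_lt (continuous_id.dist continuous_const) (continuous_id.dist continuous_const)
    · simp only [mem_iInter]
      intro b hb
      exact ((Sfin x).mem_toFinset.1 hb).2
  · intro x hx l hl
    simp only [DV, mem_setOf_eq] at hx ⊢
    set y := a + l • (x - a) with hy
    have h1 : dist y a = l * dist x a := by
      rw [dist_eq_norm, dist_eq_norm]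
      have h : y - a = l • (x - a) := by rw [hy]; abel
      rw [h, norm_smul, Real.norm_of_nonneg hl.1]
    have h2 : dist x y = (1 - l) * dist x a := by
      rw [dist_eq_norm, dist_eq_norm]
      have h : x - y = (1 - l) • (x - a) := by rw [hy]; module
      rw [h, norm_smul, Real.norm_of_nonneg (by linarith [hl.2])]
    have hsub : {b ∈ A | dist y b < dist y a} ⊆ {b ∈ A | dist x b < dist x a} := by
      rintro b ⟨hbA, hb⟩
      refine ⟨hbA, ?_⟩
      calc dist x b ≤ dist x y + dist y b := dist_triangle x y b
        _ < dist x y + dist y a := by linarith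
        _ = dist x a := by rw [h1, h2]; ring
    exact le_trans (Set.ncard_le_ncard hsub (Sfin x)) hx
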